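/- Let λ ≠ 1 and let W₀ := {H ∈ W : H_{ijk} = 0 for all i,j,k ∈ {1,2,3}} be the semi-teleparallel constraint subspace. Then the restriction of q to W₀ has a critical point if and only if Σ_{j=1}^{3} K_{ijj} = 0 for each i ∈ {1,2,3}; and in that case H ∈ W₀ is a critical point of q|_{W₀} if and only if H_{0ij} = K_{0ij} and H_{ij0} = K_{ij0} for all i,j ∈ {1,2,3}, the components H_{0i0} being arbitrary. -/

import Mathlib

open Finset

noncomputable section

/- Index set {0,1,2,3}. -/
abbrev Idx := Fin 4

/-- The Minkowski metric η_{ab} = diag(−1,1,1,1) (which equals its inverse η^{ab}). -/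
def ηm (a b : Idx) : ℝ := if a = b then (if a = (0 : Idx) then -1 else 1) else 0

/- Rank-3 tensors H_{abc} (all indices lowered). -/
abbrev T3 := Idx → Idx → Idx → ℝ

/-- Raising all three indices: H^{abc} = η^{aa'} η^{bb'} η^{cc'} H_{a'b'c'}. -/
def up3 (H : T3) (a b c : Idx) : ℝ :=
  ∑ a', ∑ b', ∑ c', ηm a a' * ηm b b' * ηm c c' * H a' b' c'

/-- Total antisymmetrization H_{[abc]} with weight 1/3!. -/
def asym (H : T3) (a b c : Idx) : ℝ :=
  (H a b c - H a c b + H b c a - H b a c + H c a b - H c b a) / 6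

/-- The contraction H^a{}_{ca} (free index c): η^{aa'} H_{a'ca}. -/
def tr1 (H : T3) (c : Idx) : ℝ := ∑ a, ∑ a', ηm a a' * H a' c a

/-- The contraction H^{cb}{}_b (free index c): η^{cc'} η^{bb'} H_{c'b'b}. -/
def tr2 (H : T3) (c : Idx) : ℝ := ∑ b, ∑ c', ∑ b', ηm c c' * ηm b b' * H c' b' b

/-- The quadratic functional
`q(H) = H^{abc}(H_{cba} − 2K_{cba}) + H^a{}_{ca}(H^{cb}{}_b − 2K^{cb}{}_b)
        + λ H^{[abc]}(H_{[abc]} − 2K_{[abc]})`. -/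
def qfun (lam : ℝ) (K H : T3) : ℝ :=
  (∑ a, ∑ b, ∑ c, up3 H a b c * (H c b a - 2 * K c b a))
  + (∑ c, tr1 H c * (tr2 H c - 2 * tr2 K c))
  + lam * ∑ a, ∑ b, ∑ c,
      up3 (fun x y z => asym H x y z) a b c * (asym H a b c - 2 * asym K a b c)

/-- `W`: the space of rank-3 tensors antisymmetric in their first two indices. -/
def Wsub : Submodule ℝ T3 where
  carrier := {H | ∀ a b c, H a b c = -H b a c}
  add_mem' := by
    intro x y hx hy a b c
    simp only [Pi.add_apply]
    rw [hx a b c, hy a b c]; ring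
  zero_mem' := by intro a b c; simp
  smul_mem' := by
    intro r x hx a b c
    simp only [Pi.smul_apply, smul_eq_mul]
    rw [hx a b c]; ring

/-- `W₀`: the semi-teleparallel constraint subspace of `W`, consisting of tensors
antisymmetric in their first two indices whose purely spatial components vanish
(`H_{ijk} = 0` for `i,j,k ∈ {1,2,3}`). -/
def W0 : Submodule ℝ T3 where
  carrier := {H | (∀ a b c, H a b c = -H b a c) ∧
    ∀ i j k : Fin 3, H i.succ j.succ k.succ = 0}
  add_mem' := by
    intro x y hx hy
    constructor
    · intro a b c
      simp only [Pi.add_apply]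
      rw [hx.1 a b c, hy.1 a b c]; ring
    · intro i j k
      simp only [Pi.add_apply]
      rw [hx.2 i j k, hy.2 i j k]; ring
  zero_mem' := by
    constructor
    · intro a b c; simp
    · intro i j k; simp
  smul_mem' := by
    intro r x hx
    constructor
    · intro a b c
      simp only [Pi.smul_apply, smul_eq_mul]
      rw [hx.1 a b c]; ring
    · intro i j k
      simp only [Pi.smul_apply, smul_eq_mul]
      rw [hx.2 i j k]; ring


/-! ### Auxiliary machinery -/

def sg (a : Idx) : ℝ := if a = 0 then -1 else 1

lemma sg_zero : sg 0 = -1 := by simp [sg]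
lemma sg_one : sg 1 = 1 := by rw [sg, if_neg (by decide)]
lemma sg_two : sg 2 = 1 := by rw [sg, if_neg (by decide)]
lemma sg_three : sg 3 = 1 := by rw [sg, if_neg (by decide)]

lemma collapse (a : Idx) (f : Idx → ℝ) : (∑ x, ηm a x * f x) = sg a * f a := by
  fin_cases a <;> simp [ηm, sg, Fin.sum_univ_four]

lemma up3_eq (H : T3) (a b c : Idx) : up3 H a b c = sg a * sg b * sg c * H a b c := by
  have h1 : ∀ a' b', (∑ c', ηm a a' * ηm b b' * ηm c c' * H a' b' c')
      = ηm a a' * ηm b b' * (sg c * H a' b' c) := by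
    intro a' b'
    rw [← collapse c (fun x => H a' b' x), Finset.mul_sum]
    exact Finset.sum_congr rfl fun _ _ => by ring
  have h2 : ∀ a', (∑ b', ∑ c', ηm a a' * ηm b b' * ηm c c' * H a' b' c')
      = ηm a a' * (sg b * (sg c * H a' b c)) := by
    intro a'
    simp only [h1]
    rw [← collapse b (fun x => sg c * H a' x c), Finset.mul_sum]
    exact Finset.sum_congr rfl fun _ _ => by ring
  unfold up3
  simp only [h2]
  rw [collapse a (fun x => sg b * (sg c * H x b c))]
  ring

lemma tr1_eq (H : T3) (c : Idx) : tr1 H c = -H 0 c 0 + H 1 c 1 + H 2 c 2 + H 3 c 3 := by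
  unfold tr1
  rw [Fin.sum_univ_four]
  simp only [collapse]
  simp [sg]

lemma tr2_eq (H : T3) (c : Idx) :
    tr2 H c = sg c * (-H c 0 0 + H c 1 1 + H c 2 2 + H c 3 3) := by
  unfold tr2
  have h1 : ∀ b, (∑ c', ∑ b', ηm c c' * ηm b b' * H c' b' b) = sg c * (sg b * H c b b) := by
    intro b
    have h0 : ∀ c', (∑ b', ηm c c' * ηm b b' * H c' b' b) = ηm c c' * (sg b * H c' b b) := by
      intro c'
      rw [← collapse b (fun x => H c' x b), Finset.mul_sum]
      exact Finset.sum_congr rfl fun _ _ => by ring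
    simp only [h0]
    exact collapse c _
  simp only [h1]
  rw [Fin.sum_univ_four]
  simp only [sg_zero, sg_one, sg_two, sg_three]
  ring

def Bfun (lam : ℝ) (F G : T3) : ℝ :=
  (∑ a, ∑ b, ∑ c, up3 F a b c * G c b a)
  + (∑ c, tr1 F c * tr2 G c)
  + lam * ∑ a, ∑ b, ∑ c,
      up3 (fun x y z => asym F x y z) a b c * asym G a b c

lemma qfun_eq' (lam : ℝ) (K H : T3) :
    qfun lam K H = Bfun lam H H - 2 * Bfun lam H K := by
  simp only [qfun, Bfun, Fin.sum_univ_four]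
  ring

lemma asym_add (x y : T3) (a b c : Idx) :
    asym (x + y) a b c = asym x a b c + asym y a b c := by
  simp only [asym, Pi.add_apply]; ring

lemma asym_smul (r : ℝ) (x : T3) (a b c : Idx) :
    asym (r • x) a b c = r * asym x a b c := by
  simp only [asym, Pi.smul_apply, smul_eq_mul]; ring

lemma Bfun_add_left (lam : ℝ) (x y G : T3) :
    Bfun lam (x + y) G = Bfun lam x G + Bfun lam y G := by
  simp only [Bfun, up3_eq, asym_add, Pi.add_apply, tr1_eq, tr2_eq, Fin.sum_univ_four]
  ring

lemma Bfun_smul_left (lam r : ℝ) (x G : T3) :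
    Bfun lam (r • x) G = r * Bfun lam x G := by
  simp only [Bfun, up3_eq, asym_smul, Pi.smul_apply, smul_eq_mul, tr1_eq, tr2_eq,
    Fin.sum_univ_four]
  ring

lemma Bfun_add_right (lam : ℝ) (F x y : T3) :
    Bfun lam F (x + y) = Bfun lam F x + Bfun lam F y := by
  simp only [Bfun, up3_eq, asym_add, Pi.add_apply, tr1_eq, tr2_eq, Fin.sum_univ_four]
  ring

lemma Bfun_smul_right (lam r : ℝ) (F x : T3) :
    Bfun lam F (r • x) = r * Bfun lam F x := by
  simp only [Bfun, up3_eq, asym_smul, Pi.smul_apply, smul_eq_mul, tr1_eq, tr2_eq,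
    Fin.sum_univ_four]
  ring

def Bmap (lam : ℝ) : T3 →ₗ[ℝ] T3 →ₗ[ℝ] ℝ :=
  LinearMap.mk₂ ℝ (Bfun lam) (Bfun_add_left lam) (Bfun_smul_left lam)
    (Bfun_add_right lam) (Bfun_smul_right lam)

def BL (lam : ℝ) : T3 →L[ℝ] T3 →L[ℝ] ℝ :=
  LinearMap.toContinuousLinearMap
    ((LinearMap.toContinuousLinearMap :
        (T3 →ₗ[ℝ] ℝ) ≃ₗ[ℝ] (T3 →L[ℝ] ℝ)).toLinearMap ∘ₗ Bmap lam)

lemma BL_apply (lam : ℝ) (x y : T3) : BL lam x y = Bfun lam x y := rfl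

set_option maxHeartbeats 1000000 in
lemma hasFDerivAt_quad (lam : ℝ) (K x : T3) :
    HasFDerivAt (fun z : T3 => BL lam z z - 2 * BL lam z K)
      (BL lam x + (BL lam).flip x - (2:ℝ) • (BL lam).flip K) x := by
  have hb : IsBoundedBilinearMap ℝ (fun p : T3 × T3 => BL lam p.1 p.2) :=
    (BL lam).isBoundedBilinearMap
  have hdiag : HasFDerivAt (fun z : T3 => (z, z))
      ((ContinuousLinearMap.id ℝ T3).prod (ContinuousLinearMap.id ℝ T3)) x :=
    HasFDerivAt.prodMk (hasFDerivAt_id x) (hasFDerivAt_id x)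
  have h1 := HasFDerivAt.comp (g := fun p : T3 × T3 => BL lam p.1 p.2)
      (f := fun z : T3 => (z, z)) x (hb.hasFDerivAt (x, x)) hdiag
  have h1' : (hb.deriv (x, x)).comp
        ((ContinuousLinearMap.id ℝ T3).prod (ContinuousLinearMap.id ℝ T3))
      = BL lam x + (BL lam).flip x := by
    ext v
    simp [hb.deriv_apply]
  rw [h1'] at h1
  have h2 : HasFDerivAt (fun z : T3 => (2:ℝ) * BL lam z K) ((2:ℝ) • (BL lam).flip K) x := by
    have h3 := ((BL lam).flip K).hasFDerivAt (x := x)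
    have h4 := h3.const_mul (2:ℝ)
    simpa using h4
  exact h1.sub h2

set_option maxHeartbeats 1000000 in
lemma qfderiv_eq (lam : ℝ) (K : T3) (H : W0) :
    fderiv ℝ (fun H : W0 => qfun lam K (H : T3)) H
      = ((BL lam (H:T3)) + (BL lam).flip (H:T3)
          - (2:ℝ) • (BL lam).flip K).comp W0.subtypeL := by
  have hfun : (fun H : W0 => qfun lam K (H : T3))
      = (fun z : T3 => BL lam z z - 2 * BL lam z K) ∘ (W0.subtypeL) := by
    funext z
    simp only [Function.comp_apply, Submodule.subtypeL_apply, BL_apply, qfun_eq']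
  rw [hfun]
  exact (((hasFDerivAt_quad lam K (H:T3)).comp H (W0.subtypeL.hasFDerivAt))).fderiv

set_option maxHeartbeats 1000000 in
lemma qfderiv_zero_iff (lam : ℝ) (K : T3) (H : W0) :
    fderiv ℝ (fun H : W0 => qfun lam K (H : T3)) H = 0
      ↔ ∀ V : T3, V ∈ W0 →
          Bfun lam (H:T3) V + Bfun lam V (H:T3) - 2 * Bfun lam V K = 0 := by
  rw [qfderiv_eq]
  constructor
  · intro h V hV
    have h2 := ContinuousLinearMap.ext_iff.mp h ⟨V, hV⟩
    simp only [ContinuousLinearMap.comp_apply, ContinuousLinearMap.add_apply,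
      ContinuousLinearMap.coe_sub', Pi.sub_apply, ContinuousLinearMap.smul_apply,
      ContinuousLinearMap.flip_apply, ContinuousLinearMap.zero_apply,
      Submodule.subtypeL_apply, BL_apply, smul_eq_mul] at h2
    linarith [h2]
  · intro h
    ext V
    have h2 := h V V.2
    simp only [ContinuousLinearMap.comp_apply, ContinuousLinearMap.add_apply,
      ContinuousLinearMap.coe_sub', Pi.sub_apply, ContinuousLinearMap.smul_apply,
      ContinuousLinearMap.flip_apply, ContinuousLinearMap.zero_apply,
      Submodule.subtypeL_apply, BL_apply, smul_eq_mul]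
    linarith [h2]

lemma Wdiag {X : T3} (h : ∀ a b c, X a b c = -X b a c) (a c : Idx) : X a a c = 0 := by
  have h1 := h a a c; linarith

lemma asym_W {X : T3} (h : ∀ a b c, X a b c = -X b a c) (a b c : Idx) :
    asym X a b c = (X a b c + X b c a + X c a b) / 3 := by
  have h1 := h a c b; have h2 := h b a c; have h3 := h c b a
  simp only [asym]; linarith
lemma DD_formula (lam : ℝ) (H V K : T3) (hH : H ∈ W0) (hV : V ∈ W0)
    (hK : ∀ a b c, K a b c = -K b a c) :
    Bfun lam H V + Bfun lam V H - 2 * Bfun lam V K =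
      (2 : ℝ) * H 0 1 1 * V 0 2 2
      + (2 : ℝ) * H 0 1 1 * V 0 3 3
      + (-4/3 : ℝ) * H 0 1 2 * V 0 1 2 * lam
      + (-2 : ℝ) * H 0 1 2 * V 0 2 1
      + (4/3 : ℝ) * H 0 1 2 * V 0 2 1 * lam
      + (2 : ℝ) * H 0 1 2 * V 1 2 0
      + (-4/3 : ℝ) * H 0 1 2 * V 1 2 0 * lam
      + (-4/3 : ℝ) * H 0 1 3 * V 0 1 3 * lam
      + (-2 : ℝ) * H 0 1 3 * V 0 3 1
      + (4/3 : ℝ) * H 0 1 3 * V 0 3 1 * lam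
      + (2 : ℝ) * H 0 1 3 * V 1 3 0
      + (-4/3 : ℝ) * H 0 1 3 * V 1 3 0 * lam
      + (-2 : ℝ) * H 0 2 1 * V 0 1 2
      + (4/3 : ℝ) * H 0 2 1 * V 0 1 2 * lam
      + (-4/3 : ℝ) * H 0 2 1 * V 0 2 1 * lam
      + (-2 : ℝ) * H 0 2 1 * V 1 2 0
      + (4/3 : ℝ) * H 0 2 1 * V 1 2 0 * lam
      + (2 : ℝ) * H 0 2 2 * V 0 1 1
      + (2 : ℝ) * H 0 2 2 * V 0 3 3
      + (-4/3 : ℝ) * H 0 2 3 * V 0 2 3 * lam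
      + (-2 : ℝ) * H 0 2 3 * V 0 3 2
      + (4/3 : ℝ) * H 0 2 3 * V 0 3 2 * lam
      + (2 : ℝ) * H 0 2 3 * V 2 3 0
      + (-4/3 : ℝ) * H 0 2 3 * V 2 3 0 * lam
      + (-2 : ℝ) * H 0 3 1 * V 0 1 3
      + (4/3 : ℝ) * H 0 3 1 * V 0 1 3 * lam
      + (-4/3 : ℝ) * H 0 3 1 * V 0 3 1 * lam
      + (-2 : ℝ) * H 0 3 1 * V 1 3 0
      + (4/3 : ℝ) * H 0 3 1 * V 1 3 0 * lam
      + (-2 : ℝ) * H 0 3 2 * V 0 2 3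
      + (4/3 : ℝ) * H 0 3 2 * V 0 2 3 * lam
      + (-4/3 : ℝ) * H 0 3 2 * V 0 3 2 * lam
      + (-2 : ℝ) * H 0 3 2 * V 2 3 0
      + (4/3 : ℝ) * H 0 3 2 * V 2 3 0 * lam
      + (2 : ℝ) * H 0 3 3 * V 0 1 1
      + (2 : ℝ) * H 0 3 3 * V 0 2 2
      + (2 : ℝ) * H 1 2 0 * V 0 1 2
      + (-4/3 : ℝ) * H 1 2 0 * V 0 1 2 * lam
      + (-2 : ℝ) * H 1 2 0 * V 0 2 1
      + (4/3 : ℝ) * H 1 2 0 * V 0 2 1 * lam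
      + (-4/3 : ℝ) * H 1 2 0 * V 1 2 0 * lam
      + (2 : ℝ) * H 1 3 0 * V 0 1 3
      + (-4/3 : ℝ) * H 1 3 0 * V 0 1 3 * lam
      + (-2 : ℝ) * H 1 3 0 * V 0 3 1
      + (4/3 : ℝ) * H 1 3 0 * V 0 3 1 * lam
      + (-4/3 : ℝ) * H 1 3 0 * V 1 3 0 * lam
      + (2 : ℝ) * H 2 3 0 * V 0 2 3
      + (-4/3 : ℝ) * H 2 3 0 * V 0 2 3 * lam
      + (-2 : ℝ) * H 2 3 0 * V 0 3 2
      + (4/3 : ℝ) * H 2 3 0 * V 0 3 2 * lam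
      + (-4/3 : ℝ) * H 2 3 0 * V 2 3 0 * lam
      + (-2 : ℝ) * K 0 1 1 * V 0 2 2
      + (-2 : ℝ) * K 0 1 1 * V 0 3 3
      + (4/3 : ℝ) * K 0 1 2 * V 0 1 2 * lam
      + (2 : ℝ) * K 0 1 2 * V 0 2 1
      + (-4/3 : ℝ) * K 0 1 2 * V 0 2 1 * lam
      + (-2 : ℝ) * K 0 1 2 * V 1 2 0
      + (4/3 : ℝ) * K 0 1 2 * V 1 2 0 * lam
      + (4/3 : ℝ) * K 0 1 3 * V 0 1 3 * lam
      + (2 : ℝ) * K 0 1 3 * V 0 3 1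
      + (-4/3 : ℝ) * K 0 1 3 * V 0 3 1 * lam
      + (-2 : ℝ) * K 0 1 3 * V 1 3 0
      + (4/3 : ℝ) * K 0 1 3 * V 1 3 0 * lam
      + (2 : ℝ) * K 0 2 1 * V 0 1 2
      + (-4/3 : ℝ) * K 0 2 1 * V 0 1 2 * lam
      + (4/3 : ℝ) * K 0 2 1 * V 0 2 1 * lam
      + (2 : ℝ) * K 0 2 1 * V 1 2 0
      + (-4/3 : ℝ) * K 0 2 1 * V 1 2 0 * lam
      + (-2 : ℝ) * K 0 2 2 * V 0 1 1
      + (-2 : ℝ) * K 0 2 2 * V 0 3 3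
      + (4/3 : ℝ) * K 0 2 3 * V 0 2 3 * lam
      + (2 : ℝ) * K 0 2 3 * V 0 3 2
      + (-4/3 : ℝ) * K 0 2 3 * V 0 3 2 * lam
      + (-2 : ℝ) * K 0 2 3 * V 2 3 0
      + (4/3 : ℝ) * K 0 2 3 * V 2 3 0 * lam
      + (2 : ℝ) * K 0 3 1 * V 0 1 3
      + (-4/3 : ℝ) * K 0 3 1 * V 0 1 3 * lam
      + (4/3 : ℝ) * K 0 3 1 * V 0 3 1 * lam
      + (2 : ℝ) * K 0 3 1 * V 1 3 0
      + (-4/3 : ℝ) * K 0 3 1 * V 1 3 0 * lam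
      + (2 : ℝ) * K 0 3 2 * V 0 2 3
      + (-4/3 : ℝ) * K 0 3 2 * V 0 2 3 * lam
      + (4/3 : ℝ) * K 0 3 2 * V 0 3 2 * lam
      + (2 : ℝ) * K 0 3 2 * V 2 3 0
      + (-4/3 : ℝ) * K 0 3 2 * V 2 3 0 * lam
      + (-2 : ℝ) * K 0 3 3 * V 0 1 1
      + (-2 : ℝ) * K 0 3 3 * V 0 2 2
      + (-2 : ℝ) * K 1 2 0 * V 0 1 2
      + (4/3 : ℝ) * K 1 2 0 * V 0 1 2 * lam
      + (2 : ℝ) * K 1 2 0 * V 0 2 1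
      + (-4/3 : ℝ) * K 1 2 0 * V 0 2 1 * lam
      + (4/3 : ℝ) * K 1 2 0 * V 1 2 0 * lam
      + (-2 : ℝ) * K 1 2 1 * V 0 2 0
      + (2 : ℝ) * K 1 2 2 * V 0 1 0
      + (-2 : ℝ) * K 1 3 0 * V 0 1 3
      + (4/3 : ℝ) * K 1 3 0 * V 0 1 3 * lam
      + (2 : ℝ) * K 1 3 0 * V 0 3 1
      + (-4/3 : ℝ) * K 1 3 0 * V 0 3 1 * lam
      + (4/3 : ℝ) * K 1 3 0 * V 1 3 0 * lam
      + (-2 : ℝ) * K 1 3 1 * V 0 3 0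
      + (2 : ℝ) * K 1 3 3 * V 0 1 0
      + (-2 : ℝ) * K 2 3 0 * V 0 2 3
      + (4/3 : ℝ) * K 2 3 0 * V 0 2 3 * lam
      + (2 : ℝ) * K 2 3 0 * V 0 3 2
      + (-4/3 : ℝ) * K 2 3 0 * V 0 3 2 * lam
      + (4/3 : ℝ) * K 2 3 0 * V 2 3 0 * lam
      + (-2 : ℝ) * K 2 3 2 * V 0 3 0
      + (2 : ℝ) * K 2 3 3 * V 0 2 0 := by
  have hHa : ∀ a b c, H a b c = -H b a c := hH.1
  have hVa : ∀ a b c, V a b c = -V b a c := hV.1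
  have hHs : ∀ i j k : Fin 3, H i.succ j.succ k.succ = 0 := hH.2
  have hVs : ∀ i j k : Fin 3, V i.succ j.succ k.succ = 0 := hV.2
  have zH121 : H 1 2 1 = 0 := hHs 0 1 0
  have zH122 : H 1 2 2 = 0 := hHs 0 1 1
  have zH123 : H 1 2 3 = 0 := hHs 0 1 2
  have zH131 : H 1 3 1 = 0 := hHs 0 2 0
  have zH132 : H 1 3 2 = 0 := hHs 0 2 1
  have zH133 : H 1 3 3 = 0 := hHs 0 2 2
  have zH231 : H 2 3 1 = 0 := hHs 1 2 0
  have zH232 : H 2 3 2 = 0 := hHs 1 2 1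
  have zH233 : H 2 3 3 = 0 := hHs 1 2 2
  have zV121 : V 1 2 1 = 0 := hVs 0 1 0
  have zV122 : V 1 2 2 = 0 := hVs 0 1 1
  have zV123 : V 1 2 3 = 0 := hVs 0 1 2
  have zV131 : V 1 3 1 = 0 := hVs 0 2 0
  have zV132 : V 1 3 2 = 0 := hVs 0 2 1
  have zV133 : V 1 3 3 = 0 := hVs 0 2 2
  have zV231 : V 2 3 1 = 0 := hVs 1 2 0
  have zV232 : V 2 3 2 = 0 := hVs 1 2 1
  have zV233 : V 2 3 3 = 0 := hVs 1 2 2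
  simp only [Bfun, up3_eq, tr1_eq, tr2_eq]
  simp only [asym_W hHa, asym_W hVa, asym_W hK]
  simp only [Fin.sum_univ_four, sg_zero, sg_one, sg_two, sg_three]
  simp only [Wdiag hHa, Wdiag hVa, Wdiag hK, hHa 1 0, hHa 2 0, hHa 3 0, hHa 2 1, hHa 3 1, hHa 3 2, hVa 1 0, hVa 2 0, hVa 3 0, hVa 2 1, hVa 3 1, hVa 3 2, hK 1 0, hK 2 0, hK 3 0, hK 2 1, hK 3 1, hK 3 2, zH121, zH122, zH123, zH131, zH132, zH133, zH231, zH232, zH233, zV121, zV122, zV123, zV131, zV132, zV133, zV231, zV232, zV233]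
  ring

def bas (p q r : Idx) : T3 := fun a b c =>
  (if a = p then (1:ℝ) else 0) * (if b = q then 1 else 0) * (if c = r then 1 else 0)
  - (if a = q then (1:ℝ) else 0) * (if b = p then 1 else 0) * (if c = r then 1 else 0)

lemma bas_mem (p q r : Idx) (h : p = 0 ∨ q = 0 ∨ r = 0) : bas p q r ∈ W0 := by
  constructor
  · intro a b c
    simp only [bas]; ring
  · intro i j k
    rcases h with h | h | h <;> subst h <;>
      simp [bas, Fin.succ_ne_zero]

def Hc (K : T3) : T3 := fun a b c =>
  (if a = 0 ∧ ¬b = 0 then K a b c else 0) + (if b = 0 ∧ ¬a = 0 then K a b c else 0)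
    + (if ¬a = 0 ∧ ¬b = 0 ∧ c = 0 then K a b c else 0)

lemma Hc_mem (K : T3) (hK : ∀ a b c, K a b c = -K b a c) : Hc K ∈ W0 := by
  constructor
  · intro a b c
    by_cases ha : a = 0 <;> by_cases hb : b = 0 <;> by_cases hc : c = 0 <;>
      simp [Hc, ha, hb, hc] <;>
      linarith [hK a b c, hK 0 b c, hK a 0 c, hK b a c, hK 0 a c, hK b 0 c,
        hK 0 b 0, hK a 0 0, hK a b 0, hK b a 0,
        Wdiag hK 0 c, Wdiag hK a c, Wdiag hK b c, Wdiag hK 0 0, Wdiag hK a 0, Wdiag hK b 0]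
  · intro i j k
    simp [Hc, Fin.succ_ne_zero]

lemma Hc_0bc (K : T3) (b c : Idx) (hb : ¬b = 0) : Hc K 0 b c = K 0 b c := by
  simp [Hc, hb]

lemma Hc_ab0 (K : T3) (a b : Idx) (ha : ¬a = 0) (hb : ¬b = 0) : Hc K a b 0 = K a b 0 := by
  simp [Hc, ha, hb]

lemma kconds (K : T3) (hK : ∀ a b c, K a b c = -K b a c)
    (hks : ∀ i : Fin 3, (∑ j : Fin 3, K i.succ j.succ j.succ) = 0) :
    K 1 2 2 + K 1 3 3 = 0 ∧ -K 1 2 1 + K 2 3 3 = 0 ∧ -K 1 3 1 - K 2 3 2 = 0 := by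
  have h1 := hks 0; have h2 := hks 1; have h3 := hks 2
  rw [Fin.sum_univ_three] at h1 h2 h3
  have g1 : K 1 1 1 + K 1 2 2 + K 1 3 3 = 0 := h1
  have g2 : K 2 1 1 + K 2 2 2 + K 2 3 3 = 0 := h2
  have g3 : K 3 1 1 + K 3 2 2 + K 3 3 3 = 0 := h3
  refine ⟨?_, ?_, ?_⟩
  · linarith [Wdiag hK 1 1]
  · linarith [hK 2 1 1, Wdiag hK 2 2]
  · linarith [hK 3 1 1, hK 3 2 2, Wdiag hK 3 3]

lemma kconds' (K : T3) (hK : ∀ a b c, K a b c = -K b a c)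
    (k1 : K 1 2 2 + K 1 3 3 = 0) (k2 : -K 1 2 1 + K 2 3 3 = 0)
    (k3 : -K 1 3 1 - K 2 3 2 = 0) :
    ∀ i : Fin 3, (∑ j : Fin 3, K i.succ j.succ j.succ) = 0 := by
  intro i
  fin_cases i <;> rw [Fin.sum_univ_three]
  · show K 1 1 1 + K 1 2 2 + K 1 3 3 = 0
    linarith [Wdiag hK 1 1]
  · show K 2 1 1 + K 2 2 2 + K 2 3 3 = 0
    linarith [hK 2 1 1, Wdiag hK 2 2, k2]
  · show K 3 1 1 + K 3 2 2 + K 3 3 3 = 0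
    linarith [hK 3 1 1, hK 3 2 2, Wdiag hK 3 3, k3]

set_option maxHeartbeats 4000000 in
set_option maxRecDepth 10000 in
lemma crit_char (lam : ℝ) (hlam : lam ≠ 1) (H K : T3) (hH : H ∈ W0)
    (hK : ∀ a b c, K a b c = -K b a c) :
    (∀ V : T3, V ∈ W0 → Bfun lam H V + Bfun lam V H - 2 * Bfun lam V K = 0) ↔
    ((K 1 2 2 + K 1 3 3 = 0 ∧ -K 1 2 1 + K 2 3 3 = 0 ∧ -K 1 3 1 - K 2 3 2 = 0) ∧
     (H 0 1 1 = K 0 1 1 ∧ H 0 1 2 = K 0 1 2 ∧ H 0 1 3 = K 0 1 3 ∧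
      H 0 2 1 = K 0 2 1 ∧ H 0 2 2 = K 0 2 2 ∧ H 0 2 3 = K 0 2 3 ∧
      H 0 3 1 = K 0 3 1 ∧ H 0 3 2 = K 0 3 2 ∧ H 0 3 3 = K 0 3 3 ∧
      H 1 2 0 = K 1 2 0 ∧ H 1 3 0 = K 1 3 0 ∧ H 2 3 0 = K 2 3 0)) := by
  have h16 : (16 : ℝ) - 16 * lam ≠ 0 := fun h => hlam (by linarith)
  constructor
  · intro hcrit
    have eq010 : (2 : ℝ) * K 1 2 2 + (2 : ℝ) * K 1 3 3 = 0 := by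
      have h := hcrit (bas 0 1 0) (bas_mem 0 1 0 (Or.inl rfl))
      rw [DD_formula lam H (bas 0 1 0) K hH (bas_mem 0 1 0 (Or.inl rfl)) hK] at h
      simp only [bas] at h
      simp at h
      linear_combination h
    have eq020 : (-2 : ℝ) * K 1 2 1 + (2 : ℝ) * K 2 3 3 = 0 := by
      have h := hcrit (bas 0 2 0) (bas_mem 0 2 0 (Or.inl rfl))
      rw [DD_formula lam H (bas 0 2 0) K hH (bas_mem 0 2 0 (Or.inl rfl)) hK] at h
      simp only [bas] at h
      simp at h
      linear_combination h
    have eq030 : (-2 : ℝ) * K 1 3 1 + (-2 : ℝ) * K 2 3 2 = 0 := by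
      have h := hcrit (bas 0 3 0) (bas_mem 0 3 0 (Or.inl rfl))
      rw [DD_formula lam H (bas 0 3 0) K hH (bas_mem 0 3 0 (Or.inl rfl)) hK] at h
      simp only [bas] at h
      simp at h
      linear_combination h
    have eq011 : (2 : ℝ) * H 0 2 2 + (2 : ℝ) * H 0 3 3 + (-2 : ℝ) * K 0 2 2 + (-2 : ℝ) * K 0 3 3 = 0 := by
      have h := hcrit (bas 0 1 1) (bas_mem 0 1 1 (Or.inl rfl))
      rw [DD_formula lam H (bas 0 1 1) K hH (bas_mem 0 1 1 (Or.inl rfl)) hK] at h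
      simp only [bas] at h
      simp at h
      linear_combination h
    have eq022 : (2 : ℝ) * H 0 1 1 + (2 : ℝ) * H 0 3 3 + (-2 : ℝ) * K 0 1 1 + (-2 : ℝ) * K 0 3 3 = 0 := by
      have h := hcrit (bas 0 2 2) (bas_mem 0 2 2 (Or.inl rfl))
      rw [DD_formula lam H (bas 0 2 2) K hH (bas_mem 0 2 2 (Or.inl rfl)) hK] at h
      simp only [bas] at h
      simp at h
      linear_combination h
    have eq033 : (2 : ℝ) * H 0 1 1 + (2 : ℝ) * H 0 2 2 + (-2 : ℝ) * K 0 1 1 + (-2 : ℝ) * K 0 2 2 = 0 := by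
      have h := hcrit (bas 0 3 3) (bas_mem 0 3 3 (Or.inl rfl))
      rw [DD_formula lam H (bas 0 3 3) K hH (bas_mem 0 3 3 (Or.inl rfl)) hK] at h
      simp only [bas] at h
      simp at h
      linear_combination h
    have eq012 : (-4/3 : ℝ) * H 0 1 2 * lam + (-2 : ℝ) * H 0 2 1 + (4/3 : ℝ) * H 0 2 1 * lam + (2 : ℝ) * H 1 2 0 + (-4/3 : ℝ) * H 1 2 0 * lam + (4/3 : ℝ) * K 0 1 2 * lam + (2 : ℝ) * K 0 2 1 + (-4/3 : ℝ) * K 0 2 1 * lam + (-2 : ℝ) * K 1 2 0 + (4/3 : ℝ) * K 1 2 0 * lam = 0 := by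
      have h := hcrit (bas 0 1 2) (bas_mem 0 1 2 (Or.inl rfl))
      rw [DD_formula lam H (bas 0 1 2) K hH (bas_mem 0 1 2 (Or.inl rfl)) hK] at h
      simp only [bas] at h
      simp at h
      linear_combination h
    have eq021 : (-2 : ℝ) * H 0 1 2 + (4/3 : ℝ) * H 0 1 2 * lam + (-4/3 : ℝ) * H 0 2 1 * lam + (-2 : ℝ) * H 1 2 0 + (4/3 : ℝ) * H 1 2 0 * lam + (2 : ℝ) * K 0 1 2 + (-4/3 : ℝ) * K 0 1 2 * lam + (4/3 : ℝ) * K 0 2 1 * lam + (2 : ℝ) * K 1 2 0 + (-4/3 : ℝ) * K 1 2 0 * lam = 0 := by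
      have h := hcrit (bas 0 2 1) (bas_mem 0 2 1 (Or.inl rfl))
      rw [DD_formula lam H (bas 0 2 1) K hH (bas_mem 0 2 1 (Or.inl rfl)) hK] at h
      simp only [bas] at h
      simp at h
      linear_combination h
    have eq120 : (2 : ℝ) * H 0 1 2 + (-4/3 : ℝ) * H 0 1 2 * lam + (-2 : ℝ) * H 0 2 1 + (4/3 : ℝ) * H 0 2 1 * lam + (-4/3 : ℝ) * H 1 2 0 * lam + (-2 : ℝ) * K 0 1 2 + (4/3 : ℝ) * K 0 1 2 * lam + (2 : ℝ) * K 0 2 1 + (-4/3 : ℝ) * K 0 2 1 * lam + (4/3 : ℝ) * K 1 2 0 * lam = 0 := by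
      have h := hcrit (bas 1 2 0) (bas_mem 1 2 0 (Or.inr (Or.inr rfl)))
      rw [DD_formula lam H (bas 1 2 0) K hH (bas_mem 1 2 0 (Or.inr (Or.inr rfl))) hK] at h
      simp only [bas] at h
      simp at h
      linear_combination h
    have eq013 : (-4/3 : ℝ) * H 0 1 3 * lam + (-2 : ℝ) * H 0 3 1 + (4/3 : ℝ) * H 0 3 1 * lam + (2 : ℝ) * H 1 3 0 + (-4/3 : ℝ) * H 1 3 0 * lam + (4/3 : ℝ) * K 0 1 3 * lam + (2 : ℝ) * K 0 3 1 + (-4/3 : ℝ) * K 0 3 1 * lam + (-2 : ℝ) * K 1 3 0 + (4/3 : ℝ) * K 1 3 0 * lam = 0 := by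
      have h := hcrit (bas 0 1 3) (bas_mem 0 1 3 (Or.inl rfl))
      rw [DD_formula lam H (bas 0 1 3) K hH (bas_mem 0 1 3 (Or.inl rfl)) hK] at h
      simp only [bas] at h
      simp at h
      linear_combination h
    have eq031 : (-2 : ℝ) * H 0 1 3 + (4/3 : ℝ) * H 0 1 3 * lam + (-4/3 : ℝ) * H 0 3 1 * lam + (-2 : ℝ) * H 1 3 0 + (4/3 : ℝ) * H 1 3 0 * lam + (2 : ℝ) * K 0 1 3 + (-4/3 : ℝ) * K 0 1 3 * lam + (4/3 : ℝ) * K 0 3 1 * lam + (2 : ℝ) * K 1 3 0 + (-4/3 : ℝ) * K 1 3 0 * lam = 0 := by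
      have h := hcrit (bas 0 3 1) (bas_mem 0 3 1 (Or.inl rfl))
      rw [DD_formula lam H (bas 0 3 1) K hH (bas_mem 0 3 1 (Or.inl rfl)) hK] at h
      simp only [bas] at h
      simp at h
      linear_combination h
    have eq130 : (2 : ℝ) * H 0 1 3 + (-4/3 : ℝ) * H 0 1 3 * lam + (-2 : ℝ) * H 0 3 1 + (4/3 : ℝ) * H 0 3 1 * lam + (-4/3 : ℝ) * H 1 3 0 * lam + (-2 : ℝ) * K 0 1 3 + (4/3 : ℝ) * K 0 1 3 * lam + (2 : ℝ) * K 0 3 1 + (-4/3 : ℝ) * K 0 3 1 * lam + (4/3 : ℝ) * K 1 3 0 * lam = 0 := by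
      have h := hcrit (bas 1 3 0) (bas_mem 1 3 0 (Or.inr (Or.inr rfl)))
      rw [DD_formula lam H (bas 1 3 0) K hH (bas_mem 1 3 0 (Or.inr (Or.inr rfl))) hK] at h
      simp only [bas] at h
      simp at h
      linear_combination h
    have eq023 : (-4/3 : ℝ) * H 0 2 3 * lam + (-2 : ℝ) * H 0 3 2 + (4/3 : ℝ) * H 0 3 2 * lam + (2 : ℝ) * H 2 3 0 + (-4/3 : ℝ) * H 2 3 0 * lam + (4/3 : ℝ) * K 0 2 3 * lam + (2 : ℝ) * K 0 3 2 + (-4/3 : ℝ) * K 0 3 2 * lam + (-2 : ℝ) * K 2 3 0 + (4/3 : ℝ) * K 2 3 0 * lam = 0 := by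
      have h := hcrit (bas 0 2 3) (bas_mem 0 2 3 (Or.inl rfl))
      rw [DD_formula lam H (bas 0 2 3) K hH (bas_mem 0 2 3 (Or.inl rfl)) hK] at h
      simp only [bas] at h
      simp at h
      linear_combination h
    have eq032 : (-2 : ℝ) * H 0 2 3 + (4/3 : ℝ) * H 0 2 3 * lam + (-4/3 : ℝ) * H 0 3 2 * lam + (-2 : ℝ) * H 2 3 0 + (4/3 : ℝ) * H 2 3 0 * lam + (2 : ℝ) * K 0 2 3 + (-4/3 : ℝ) * K 0 2 3 * lam + (4/3 : ℝ) * K 0 3 2 * lam + (2 : ℝ) * K 2 3 0 + (-4/3 : ℝ) * K 2 3 0 * lam = 0 := by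
      have h := hcrit (bas 0 3 2) (bas_mem 0 3 2 (Or.inl rfl))
      rw [DD_formula lam H (bas 0 3 2) K hH (bas_mem 0 3 2 (Or.inl rfl)) hK] at h
      simp only [bas] at h
      simp at h
      linear_combination h
    have eq230 : (2 : ℝ) * H 0 2 3 + (-4/3 : ℝ) * H 0 2 3 * lam + (-2 : ℝ) * H 0 3 2 + (4/3 : ℝ) * H 0 3 2 * lam + (-4/3 : ℝ) * H 2 3 0 * lam + (-2 : ℝ) * K 0 2 3 + (4/3 : ℝ) * K 0 2 3 * lam + (2 : ℝ) * K 0 3 2 + (-4/3 : ℝ) * K 0 3 2 * lam + (4/3 : ℝ) * K 2 3 0 * lam = 0 := by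
      have h := hcrit (bas 2 3 0) (bas_mem 2 3 0 (Or.inr (Or.inr rfl)))
      rw [DD_formula lam H (bas 2 3 0) K hH (bas_mem 2 3 0 (Or.inr (Or.inr rfl))) hK] at h
      simp only [bas] at h
      simp at h
      linear_combination h
    have solve : ∀ u v : ℝ, (16 - 16 * lam) * (u - v) = 0 → u = v := by
      intro u v h
      rcases mul_eq_zero.mp h with h | h
      · exact absurd h h16
      · linarith
    refine ⟨⟨by linarith [eq010], by linarith [eq020], by linarith [eq030]⟩,
      ?_, ?_, ?_, ?_, ?_, ?_, ?_, ?_, ?_, ?_, ?_, ?_⟩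
    · linarith [eq011, eq022, eq033]
    · exact solve _ _ (by linear_combination ((-4 : ℝ) + (16/3) * lam) * eq012 + ((-4 : ℝ) + (8/3) * lam) * eq021 + ((4 : ℝ) - (8/3) * lam) * eq120)
    · exact solve _ _ (by linear_combination ((-4 : ℝ) + (16/3) * lam) * eq013 + ((-4 : ℝ) + (8/3) * lam) * eq031 + ((4 : ℝ) - (8/3) * lam) * eq130)
    · exact solve _ _ (by linear_combination ((-4 : ℝ) + (8/3) * lam) * eq012 + ((-4 : ℝ) + (16/3) * lam) * eq021 + ((-4 : ℝ) + (8/3) * lam) * eq120)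
    · linarith [eq011, eq022, eq033]
    · exact solve _ _ (by linear_combination ((-4 : ℝ) + (16/3) * lam) * eq023 + ((-4 : ℝ) + (8/3) * lam) * eq032 + ((4 : ℝ) - (8/3) * lam) * eq230)
    · exact solve _ _ (by linear_combination ((-4 : ℝ) + (8/3) * lam) * eq013 + ((-4 : ℝ) + (16/3) * lam) * eq031 + ((-4 : ℝ) + (8/3) * lam) * eq130)
    · exact solve _ _ (by linear_combination ((-4 : ℝ) + (8/3) * lam) * eq023 + ((-4 : ℝ) + (16/3) * lam) * eq032 + ((-4 : ℝ) + (8/3) * lam) * eq230)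
    · linarith [eq011, eq022, eq033]
    · exact solve _ _ (by linear_combination ((4 : ℝ) - (8/3) * lam) * eq012 + ((-4 : ℝ) + (8/3) * lam) * eq021 + ((-4 : ℝ) + (16/3) * lam) * eq120)
    · exact solve _ _ (by linear_combination ((4 : ℝ) - (8/3) * lam) * eq013 + ((-4 : ℝ) + (8/3) * lam) * eq031 + ((-4 : ℝ) + (16/3) * lam) * eq130)
    · exact solve _ _ (by linear_combination ((4 : ℝ) - (8/3) * lam) * eq023 + ((-4 : ℝ) + (8/3) * lam) * eq032 + ((-4 : ℝ) + (16/3) * lam) * eq230)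
  · rintro ⟨⟨k1, k2, k3⟩, e011, e012, e013, e021, e022, e023, e031, e032, e033,
      e120, e130, e230⟩
    intro V hV
    rw [DD_formula lam H V K hH hV hK]
    linear_combination (2 : ℝ) * V 0 1 0 * k1 + (2 : ℝ) * V 0 2 0 * k2 + (2 : ℝ) * V 0 3 0 * k3 + (2 : ℝ) * V 0 1 1 * e022 + (2 : ℝ) * V 0 1 1 * e033 + (2 : ℝ) * V 0 2 2 * e011 + (2 : ℝ) * V 0 2 2 * e033 + (2 : ℝ) * V 0 3 3 * e011 + (2 : ℝ) * V 0 3 3 * e022 + (-4/3 : ℝ) * lam * V 0 1 2 * e012 + (-2 : ℝ) * V 0 1 2 * e021 + (4/3 : ℝ) * lam * V 0 1 2 * e021 + (2 : ℝ) * V 0 1 2 * e120 + (-4/3 : ℝ) * lam * V 0 1 2 * e120 + (-2 : ℝ) * V 0 2 1 * e012 + (4/3 : ℝ) * lam * V 0 2 1 * e012 + (-4/3 : ℝ) * lam * V 0 2 1 * e021 + (-2 : ℝ) * V 0 2 1 * e120 + (4/3 : ℝ) * lam * V 0 2 1 * e120 + (2 : ℝ) * V 1 2 0 * e012 + (-4/3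 : ℝ) * lam * V 1 2 0 * e012 + (-2 : ℝ) * V 1 2 0 * e021 + (4/3 : ℝ) * lam * V 1 2 0 * e021 + (-4/3 : ℝ) * lam * V 1 2 0 * e120 + (-4/3 : ℝ) * lam * V 0 1 3 * e013 + (-2 : ℝ) * V 0 1 3 * e031 + (4/3 : ℝ) * lam * V 0 1 3 * e031 + (2 : ℝ) * V 0 1 3 * e130 + (-4/3 : ℝ) * lam * V 0 1 3 * e130 + (-2 : ℝ) * V 0 3 1 * e013 + (4/3 : ℝ) * lam * V 0 3 1 * e013 + (-4/3 : ℝ) * lam * V 0 3 1 * e031 + (-2 : ℝ) * V 0 3 1 * e130 + (4/3 : ℝ) * lam * V 0 3 1 * e130 + (2 : ℝ) * V 1 3 0 * e013 + (-4/3 : ℝ) * lam * V 1 3 0 * e013 + (-2 : ℝ) * V 1 3 0 * e031 + (4/3 : ℝ) * lam * V 1 3 0 * e031 + (-4/3 : ℝ) * lam * V 1 3 0 * e130 + (-4/3 : ℝ) * lam * V 0 2 3 * e023 + (-2 : ℝ) * V 0 2 3 * e032 + (4/3 : ℝ) * lam * V 0 2 3 * e032 + (2 : ℝ) * V 0 2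 3 * e230 + (-4/3 : ℝ) * lam * V 0 2 3 * e230 + (-2 : ℝ) * V 0 3 2 * e023 + (4/3 : ℝ) * lam * V 0 3 2 * e023 + (-4/3 : ℝ) * lam * V 0 3 2 * e032 + (-2 : ℝ) * V 0 3 2 * e230 + (4/3 : ℝ) * lam * V 0 3 2 * e230 + (2 : ℝ) * V 2 3 0 * e023 + (-4/3 : ℝ) * lam * V 2 3 0 * e023 + (-2 : ℝ) * V 2 3 0 * e032 + (4/3 : ℝ) * lam * V 2 3 0 * e032 + (-4/3 : ℝ) * lam * V 2 3 0 * e230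

/-- For λ ≠ 1, the restriction of `q` to the semi-teleparallel constraint
subspace `W₀` has a critical point iff `Σⱼ K_{ijj} = 0` for each spatial `i`; in that case
`H ∈ W₀` is a critical point iff `H_{0ij} = K_{0ij}` and `H_{ij0} = K_{ij0}` for all
spatial `i,j` (the components `H_{0i0}` being arbitrary). -/
theorem statement16 (lam : ℝ) (hlam : lam ≠ 1)
    (K : T3) (hK : ∀ a b c, K a b c = -K b a c) :
    ((∃ H : W0, fderiv ℝ (fun H : W0 => qfun lam K (H : T3)) H = 0) ↔
      ∀ i : Fin 3, (∑ j : Fin 3, K i.succ j.succ j.succ) = 0) ∧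
    ((∀ i : Fin 3, (∑ j : Fin 3, K i.succ j.succ j.succ) = 0) →
      ∀ H : W0, (fderiv ℝ (fun H : W0 => qfun lam K (H : T3)) H = 0 ↔
        ∀ i j : Fin 3, (H : T3) 0 i.succ j.succ = K 0 i.succ j.succ ∧
          (H : T3) i.succ j.succ 0 = K i.succ j.succ 0)) := by
  have hKd := Wdiag hK
  constructor
  · constructor
    · rintro ⟨H, hf⟩
      have hcrit := (qfderiv_zero_iff lam K H).mp hf
      have hch := (crit_char lam hlam (H : T3) K H.2 hK).mp hcrit
      exact kconds' K hK hch.1.1 hch.1.2.1 hch.1.2.2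
    · intro hks
      obtain ⟨k1, k2, k3⟩ := kconds K hK hks
      refine ⟨⟨Hc K, Hc_mem K hK⟩, ?_⟩
      rw [qfderiv_zero_iff]
      apply (crit_char lam hlam (Hc K) K (Hc_mem K hK) hK).mpr
      refine ⟨⟨k1, k2, k3⟩,
        Hc_0bc K 1 1 (by decide), Hc_0bc K 1 2 (by decide), Hc_0bc K 1 3 (by decide),
        Hc_0bc K 2 1 (by decide), Hc_0bc K 2 2 (by decide), Hc_0bc K 2 3 (by decide),
        Hc_0bc K 3 1 (by decide), Hc_0bc K 3 2 (by decide), Hc_0bc K 3 3 (by decide),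
        Hc_ab0 K 1 2 (by decide) (by decide), Hc_ab0 K 1 3 (by decide) (by decide),
        Hc_ab0 K 2 3 (by decide) (by decide)⟩
  · intro hks H
    obtain ⟨k1, k2, k3⟩ := kconds K hK hks
    have hHa : ∀ a b c, (H : T3) a b c = -(H : T3) b a c := H.2.1
    rw [qfderiv_zero_iff, crit_char lam hlam (H : T3) K H.2 hK]
    constructor
    · rintro ⟨-, e011, e012, e013, e021, e022, e023, e031, e032, e033,
        e120, e130, e230⟩
      have h110 : (H : T3) 1 1 0 = K 1 1 0 := by
        rw [Wdiag hHa 1 0, Wdiag hK 1 0]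
      have h220 : (H : T3) 2 2 0 = K 2 2 0 := by
        rw [Wdiag hHa 2 0, Wdiag hK 2 0]
      have h330 : (H : T3) 3 3 0 = K 3 3 0 := by
        rw [Wdiag hHa 3 0, Wdiag hK 3 0]
      have h210 : (H : T3) 2 1 0 = K 2 1 0 := by
        have a1 := hHa 1 2 0; have a2 := hK 1 2 0; linarith
      have h310 : (H : T3) 3 1 0 = K 3 1 0 := by
        have a1 := hHa 1 3 0; have a2 := hK 1 3 0; linarith
      have h320 : (H : T3) 3 2 0 = K 3 2 0 := by
        have a1 := hHa 2 3 0; have a2 := hK 2 3 0; linarith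
      intro i j
      fin_cases i <;> fin_cases j
      · exact ⟨e011, h110⟩
      · exact ⟨e012, e120⟩
      · exact ⟨e013, e130⟩
      · exact ⟨e021, h210⟩
      · exact ⟨e022, h220⟩
      · exact ⟨e023, e230⟩
      · exact ⟨e031, h310⟩
      · exact ⟨e032, h320⟩
      · exact ⟨e033, h330⟩
    · intro hc
      exact ⟨⟨k1, k2, k3⟩, (hc 0 0).1, (hc 0 1).1, (hc 0 2).1,
        (hc 1 0).1, (hc 1 1).1, (hc 1 2).1,
        (hc 2 0).1, (hc 2 1).1, (hc 2 2).1,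
        (hc 0 1).2, (hc 0 2).2, (hc 1 2).2⟩
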